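/- Let k ≥ 2 be an integer and G a simple graph of odd order with β^k(G) ≥ 1. Then G is hypomatchable, i.e., for every vertex v, the graph G − v has a perfect matching. -/

import Mathlib

open Finset
open scoped Classical

variable {V : Type*}

/-- The k-th neighborhood: vertices adjacent to at least `k` vertices of `S`. -/
noncomputable def kNbhd [Fintype V] (G : SimpleGraph V) (k : ℕ) (S : Finset V) : Finset V :=
  Finset.univ.filter fun v => k ≤ (S.filter fun u => G.Adj v u).card

/-- The k-th binding number. -/
noncomputable def bindingNum [Fintype V] (G : SimpleGraph V) (k : ℕ) : ℝ :=
  if h : (Finset.univ.filter fun S : Finset V =>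
      k ≤ S.card ∧ kNbhd G k S ≠ Finset.univ).Nonempty then
    (Finset.univ.filter fun S : Finset V =>
      k ≤ S.card ∧ kNbhd G k S ≠ Finset.univ).inf' h
      fun S => ((kNbhd G k S).card : ℝ) / (S.card : ℝ)
  else 0

namespace TutteAux

/-- Single step of adjacency within `B`. -/
def Step (G : SimpleGraph V) (B : Finset V) (x y : V) : Prop :=
  G.Adj x y ∧ x ∈ B ∧ y ∈ B

/-- Reachability within `B`. -/
def Rel (G : SimpleGraph V) (B : Finset V) (x y : V) : Prop :=
  Relation.ReflTransGen (Step G B) x y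

variable {G : SimpleGraph V} {B B' B₁ B₂ : Finset V} {x y z : V}

lemma rel_refl : Rel G B x x := Relation.ReflTransGen.refl

lemma rel_symm (h : Rel G B x y) : Rel G B y x :=
  (@Relation.ReflTransGen.symmetric _ (Step G B) ⟨fun _ _ h => ⟨h.1.symm, h.2.2, h.2.1⟩⟩).symm _ _ h

lemma rel_trans (h : Rel G B x y) (h' : Rel G B y z) : Rel G B x z := h.trans h'

lemma rel_of_adj (h : G.Adj x y) (hx : x ∈ B) (hy : y ∈ B) : Rel G B x y :=
  Relation.ReflTransGen.single ⟨h, hx, hy⟩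

lemma rel_mono (hBB : B ⊆ B') (h : Rel G B x y) : Rel G B' x y :=
  Relation.ReflTransGen.mono (fun _ _ h => ⟨h.1, hBB h.2.1, hBB h.2.2⟩) _ _ h

/-- The component of `x` within `B`. -/
noncomputable def cmp (G : SimpleGraph V) (B : Finset V) (x : V) : Finset V :=
  B.filter (Rel G B x)

lemma mem_cmp_iff : y ∈ cmp G B x ↔ y ∈ B ∧ Rel G B x y := Finset.mem_filter

lemma cmp_subset : cmp G B x ⊆ B := Finset.filter_subset _ _

lemma mem_cmp_self (hx : x ∈ B) : x ∈ cmp G B x := mem_cmp_iff.2 ⟨hx, rel_refl⟩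

/-- `P` is closed under adjacency within `B`. -/
def Closed (G : SimpleGraph V) (B P : Finset V) : Prop :=
  ∀ u ∈ P, ∀ v ∈ B, G.Adj u v → v ∈ P

lemma rel_mem_closed {P : Finset V} (hP : Closed G B P) (hx : x ∈ P) (h : Rel G B x y) :
    y ∈ P := by
  induction h with
  | refl => exact hx
  | tail hr hs ih => exact hP _ ih _ hs.2.2 hs.1

lemma closed_cmp : Closed G B (cmp G B x) := by
  intro u hu v hv hadj
  rcases mem_cmp_iff.1 hu with ⟨huB, hrel⟩
  exact mem_cmp_iff.2 ⟨hv, hrel.trans (rel_of_adj hadj huB hv)⟩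

lemma rel_restrict {P : Finset V} (hP : Closed G B P) (hx : x ∈ P)
    (h : Rel G B x y) : Rel G P x y := by
  induction h with
  | refl => exact rel_refl
  | @tail b c hr hs ih =>
      have hb : b ∈ P := rel_mem_closed hP hx hr
      exact ih.tail ⟨hs.1, hb, hP _ hb _ hs.2.2 hs.1⟩

lemma cmp_eq_of_subset (hBB : B ⊆ B') (hx : x ∈ B)
    (hcl : Closed G B' (cmp G B x)) : cmp G B' x = cmp G B x := by
  apply Finset.Subset.antisymm
  · intro y hy
    exact rel_mem_closed hcl (mem_cmp_self hx) (mem_cmp_iff.1 hy).2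
  · intro y hy
    rcases mem_cmp_iff.1 hy with ⟨hyB, hrel⟩
    exact mem_cmp_iff.2 ⟨hBB hyB, rel_mono hBB hrel⟩

lemma cmp_eq_cmp_of_mem (hy : y ∈ cmp G B x) : cmp G B y = cmp G B x := by
  rcases mem_cmp_iff.1 hy with ⟨hyB, hrel⟩
  ext z
  simp only [mem_cmp_iff]
  exact and_congr_right fun _ => ⟨fun h => hrel.trans h, fun h => (rel_symm hrel).trans h⟩

/-- The components of `B`. -/
noncomputable def comps (G : SimpleGraph V) (B : Finset V) : Finset (Finset V) :=
  B.image (cmp G B)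

lemma cmp_mem_comps (hx : x ∈ B) : cmp G B x ∈ comps G B :=
  Finset.mem_image_of_mem _ hx

lemma exists_rep {C : Finset V} (hC : C ∈ comps G B) : ∃ x ∈ B, cmp G B x = C := by
  rcases Finset.mem_image.1 hC with ⟨x, hx, hcmp⟩
  exact ⟨x, hx, hcmp⟩

lemma comps_nonempty {C : Finset V} (hC : C ∈ comps G B) : C.Nonempty := by
  rcases exists_rep hC with ⟨x, hx, rfl⟩
  exact ⟨x, mem_cmp_self hx⟩

lemma comps_subset {C : Finset V} (hC : C ∈ comps G B) : C ⊆ B := by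
  rcases exists_rep hC with ⟨x, _, rfl⟩
  exact cmp_subset

lemma cmp_eq_of_mem_comp {C : Finset V} (hC : C ∈ comps G B) (hy : y ∈ C) :
    cmp G B y = C := by
  rcases exists_rep hC with ⟨x, hx, rfl⟩
  exact cmp_eq_cmp_of_mem hy

lemma comps_disjoint {C C' : Finset V} (hC : C ∈ comps G B) (hC' : C' ∈ comps G B)
    (hne : C ≠ C') : Disjoint C C' := by
  rw [Finset.disjoint_left]
  intro a haC haC'
  exact hne ((cmp_eq_of_mem_comp hC haC).symm.trans (cmp_eq_of_mem_comp hC' haC'))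

lemma closed_of_comp {C : Finset V} (hC : C ∈ comps G B) : Closed G B C := by
  rcases exists_rep hC with ⟨x, _, rfl⟩
  exact closed_cmp

lemma biUnion_comps : (comps G B).biUnion id = B := by
  apply Finset.Subset.antisymm
  · intro x hx
    rcases Finset.mem_biUnion.1 hx with ⟨C, hC, hxC⟩
    exact comps_subset hC hxC
  · intro x hx
    exact Finset.mem_biUnion.2 ⟨cmp G B x, cmp_mem_comps hx, mem_cmp_self hx⟩

lemma sum_card_comps : ∑ C ∈ comps G B, C.card = B.card := by
  classical
  conv_rhs => rw [← biUnion_comps (G := G) (B := B)]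
  exact (Finset.card_biUnion fun C hC C' hC' hne => comps_disjoint hC hC' hne).symm

/-- The number of odd components of `B`. -/
noncomputable def oddCount (G : SimpleGraph V) (B : Finset V) : ℕ :=
  ((comps G B).filter fun C => Odd C.card).card

lemma oddCount_parity : B.card % 2 = oddCount G B % 2 := by
  classical
  rw [← sum_card_comps (G := G) (B := B), Finset.sum_nat_mod]
  have : ∀ C ∈ comps G B, C.card % 2 = if Odd C.card then 1 else 0 := by
    intro C _
    by_cases h : Odd C.card
    · simp [h, Nat.odd_iff.1 h]
    · simp [h, Nat.even_iff.1 (Nat.not_odd_iff_even.1 h)]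
  rw [Finset.sum_congr rfl this, ← Finset.sum_filter]
  simp [oddCount]

lemma cmp_union_left (hsep : ∀ u ∈ B₁, ∀ v ∈ B₂, ¬ G.Adj u v)
    (hx : x ∈ B₁) : cmp G (B₁ ∪ B₂) x = cmp G B₁ x := by
  apply cmp_eq_of_subset Finset.subset_union_left hx
  intro u hu v hv hadj
  rcases Finset.mem_union.1 hv with h1 | h2
  · exact closed_cmp u hu v h1 hadj
  · exact absurd hadj (hsep u (cmp_subset hu) v h2)

lemma comps_union (hsep : ∀ u ∈ B₁, ∀ v ∈ B₂, ¬ G.Adj u v) :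
    comps G (B₁ ∪ B₂) = comps G B₁ ∪ comps G B₂ := by
  have hsep' : ∀ u ∈ B₂, ∀ v ∈ B₁, ¬ G.Adj u v := fun u hu v hv hadj =>
    hsep v hv u hu hadj.symm
  unfold comps
  rw [Finset.image_union]
  congr 1
  · exact Finset.image_congr fun x hx => cmp_union_left hsep hx
  · refine Finset.image_congr fun x hx => ?_
    rw [Finset.union_comm]
    exact cmp_union_left hsep' hx

lemma oddCount_union (h : Disjoint B₁ B₂) (hsep : ∀ u ∈ B₁, ∀ v ∈ B₂, ¬ G.Adj u v) :
    oddCount G (B₁ ∪ B₂) = oddCount G B₁ + oddCount G B₂ := by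
  classical
  unfold oddCount
  rw [comps_union hsep, Finset.filter_union, Finset.card_union_of_disjoint]
  rw [Finset.disjoint_left]
  intro C hC hC'
  have h1 := comps_subset (Finset.mem_of_mem_filter _ hC)
  have h2 := comps_subset (Finset.mem_of_mem_filter _ hC')
  rcases comps_nonempty (Finset.mem_of_mem_filter _ hC) with ⟨a, ha⟩
  exact Finset.disjoint_left.1 h (h1 ha) (h2 ha)

lemma cmp_restrict {C : Finset V} (hC : C ∈ comps G B) (hy : y ∈ C) :
    cmp G C y = C := by
  apply Finset.Subset.antisymm cmp_subset
  intro z hz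
  have hrel : Rel G B y z := by
    have h1 : cmp G B y = C := cmp_eq_of_mem_comp hC hy
    exact (mem_cmp_iff.1 (h1.symm ▸ hz)).2
  exact mem_cmp_iff.2 ⟨hz, rel_restrict (closed_of_comp hC) hy hrel⟩

lemma comps_self {C : Finset V} (hC : C ∈ comps G B) : comps G C = {C} := by
  apply Finset.Subset.antisymm
  · intro D hD
    rcases exists_rep hD with ⟨y, hy, rfl⟩
    rw [Finset.mem_singleton]
    exact cmp_restrict hC hy
  · intro D hD
    rw [Finset.mem_singleton] at hD
    rcases comps_nonempty hC with ⟨a, ha⟩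
    have h2 := cmp_mem_comps (G := G) (B := C) ha
    rw [cmp_restrict hC ha] at h2
    rwa [hD]

lemma oddCount_comp {C : Finset V} (hC : C ∈ comps G B) :
    oddCount G C = if Odd C.card then 1 else 0 := by
  unfold oddCount
  rw [comps_self hC]
  by_cases h : Odd C.card <;> simp [Finset.filter_singleton, h]

lemma oddCount_sdiff {C : Finset V} (hC : C ∈ comps G B) :
    oddCount G B = oddCount G (B \ C) + oddCount G C := by
  have hu : (B \ C) ∪ C = B := Finset.sdiff_union_of_subset (comps_subset hC)
  have hsep : ∀ u ∈ B \ C, ∀ v ∈ C, ¬ G.Adj u v := by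
    intro u hu' v hv hadj
    have : u ∈ C := closed_of_comp hC v hv u (Finset.mem_sdiff.1 hu').1 hadj.symm
    exact (Finset.mem_sdiff.1 hu').2 this
  conv_lhs => rw [← hu]
  rw [oddCount_union Finset.sdiff_disjoint hsep]

/-- A perfect matching on `A` as a fixed-point-free adjacency involution. -/
def Matchable (G : SimpleGraph V) (A : Finset V) : Prop :=
  ∃ f : V → V, ∀ a ∈ A, f a ∈ A ∧ G.Adj a (f a) ∧ f (f a) = a

theorem tutte_aux (G : SimpleGraph V) : ∀ (n : ℕ) (A : Finset V), A.card ≤ n →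
    (∀ U ⊆ A, oddCount G (A \ U) ≤ U.card) → Matchable G A := by
  intro n
  induction n with
  | zero =>
    intro A hA _
    rw [Nat.le_zero, Finset.card_eq_zero] at hA
    exact ⟨id, by simp [hA]⟩
  | succ n ih =>
    intro A hAcard h
    by_cases hAe : A = ∅
    · exact ⟨id, by simp [hAe]⟩
    classical
    have hVne : Nonempty V := ⟨(Finset.nonempty_iff_ne_empty.2 hAe).choose⟩
    -- the set of "tight" subsets
    set 𝒮 : Finset (Finset V) :=
      A.powerset.filter (fun S => oddCount G (A \ S) = S.card) with h𝒮
    have hEmptyS : ∅ ∈ 𝒮 := by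
      rw [h𝒮, Finset.mem_filter]
      refine ⟨Finset.empty_mem_powerset A, ?_⟩
      have := h ∅ (Finset.empty_subset A)
      simp only [Finset.card_empty, Nat.le_zero] at this
      simpa using this
    obtain ⟨S, hS𝒮, hSmax⟩ := Finset.exists_max_image 𝒮 Finset.card ⟨∅, hEmptyS⟩
    have hSA : S ⊆ A := Finset.mem_powerset.1 (Finset.mem_filter.1 hS𝒮).1
    have hSeq : oddCount G (A \ S) = S.card := (Finset.mem_filter.1 hS𝒮).2
    have hmax : ∀ U ⊆ A, oddCount G (A \ U) = U.card → U.card ≤ S.card := by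
      intro U hUA hUeq
      exact hSmax U (Finset.mem_filter.2 ⟨Finset.mem_powerset.2 hUA, hUeq⟩)
    set B : Finset V := A \ S with hB
    -- Claim 1 : all components of B are odd
    have hodd : ∀ C ∈ comps G B, Odd C.card := by
      intro C hC
      by_contra hev
      obtain ⟨d, hd⟩ := comps_nonempty hC
      have hCA : C ⊆ B := comps_subset hC
      have hdB : d ∈ B := hCA hd
      have hdA : d ∈ A := (Finset.mem_sdiff.1 hdB).1
      have hdS : d ∉ S := (Finset.mem_sdiff.1 hdB).2
      have hun : A \ insert d S = (B \ C) ∪ C.erase d := by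
        rw [hB]
        ext x
        simp only [Finset.mem_sdiff, Finset.mem_union, Finset.mem_insert, Finset.mem_erase]
        constructor
        · rintro ⟨hxA, hni⟩
          push_neg at hni
          by_cases hxC : x ∈ C
          · exact Or.inr ⟨hni.1, hxC⟩
          · exact Or.inl ⟨⟨hxA, hni.2⟩, hxC⟩
        · rintro (⟨⟨hxA, hxS⟩, hxC⟩ | ⟨hxd, hxC⟩)
          · refine ⟨hxA, ?_⟩
            rintro (rfl | hxS')
            · exact hxC hd
            · exact hxS hxS'
          · have hxB := hCA hxC
            rw [hB, Finset.mem_sdiff] at hxB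
            refine ⟨hxB.1, ?_⟩
            rintro (rfl | hxS')
            · exact hxd rfl
            · exact hxB.2 hxS'
      have hsep : ∀ u ∈ B \ C, ∀ v ∈ C.erase d, ¬ G.Adj u v := by
        intro u hu v hv hadj
        have : u ∈ C := closed_of_comp hC v (Finset.mem_of_mem_erase hv) u
          (Finset.mem_sdiff.1 hu).1 hadj.symm
        exact (Finset.mem_sdiff.1 hu).2 this
      have hdisj : Disjoint (B \ C) (C.erase d) :=
        Finset.disjoint_of_subset_right (Finset.erase_subset d C) Finset.sdiff_disjoint
      have hBC : oddCount G (B \ C) = S.card := by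
        have h1 := oddCount_sdiff hC
        have h2 : oddCount G C = 0 := by rw [oddCount_comp hC]; simp [hev]
        omega
      have herase1 : 1 ≤ oddCount G (C.erase d) := by
        have hpar := oddCount_parity (G := G) (B := C.erase d)
        have hc1 : (C.erase d).card = C.card - 1 := Finset.card_erase_of_mem hd
        have hc2 : C.card % 2 = 0 := Nat.even_iff.1 (Nat.not_odd_iff_even.1 hev)
        have hc3 : 1 ≤ C.card := Finset.card_pos.2 ⟨d, hd⟩
        omega
      have hcount : oddCount G (A \ insert d S) = S.card + oddCount G (C.erase d) := by
        rw [hun, oddCount_union hdisj hsep, hBC]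
      have hinsA : insert d S ⊆ A := Finset.insert_subset hdA hSA
      have hinscard : (insert d S).card = S.card + 1 := Finset.card_insert_of_notMem hdS
      have hle := h _ hinsA
      have heq : oddCount G (A \ insert d S) = (insert d S).card := by omega
      have := hmax _ hinsA heq
      omega
    have hcompscard : (comps G B).card = S.card := by
      have : (comps G B).filter (fun C => Odd C.card) = comps G B :=
        Finset.filter_true_of_mem hodd
      rw [← hSeq]
      unfold oddCount
      rw [this]
    -- Hall's condition
    let t : {C // C ∈ comps G B} → Finset V := fun C => S.filter fun s => ∃ c ∈ C.1, G.Adj s c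
    have hall : ∀ (𝒜 : Finset {C // C ∈ comps G B}), 𝒜.card ≤ (𝒜.biUnion t).card := by
      intro 𝒜
      set N := 𝒜.biUnion t with hN
      have hNS : N ⊆ S := Finset.biUnion_subset.2 fun C _ => Finset.filter_subset _ _
      have hNA : N ⊆ A := hNS.trans hSA
      have hkey : ∀ C ∈ 𝒜, C.1 ∈ (comps G (A \ N)).filter (fun C => Odd C.card) := by
        intro C hC𝒜
        obtain ⟨x, hxB, hcmp⟩ := exists_rep C.2
        have hsub : B ⊆ A \ N := Finset.sdiff_subset_sdiff (le_refl A) hNS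
        have hclosed : Closed G (A \ N) (cmp G B x) := by
          intro u hu v hv hadj
          by_cases hvB : v ∈ B
          · exact closed_cmp u hu v hvB hadj
          · exfalso
            have hvS : v ∈ S := by
              have hvA : v ∈ A := (Finset.mem_sdiff.1 hv).1
              by_contra hvS
              exact hvB (Finset.mem_sdiff.2 ⟨hvA, hvS⟩)
            apply (Finset.mem_sdiff.1 hv).2
            rw [hN]
            refine Finset.mem_biUnion.2 ⟨C, hC𝒜, Finset.mem_filter.2 ⟨hvS, ?_⟩⟩
            exact ⟨u, hcmp ▸ hu, hadj.symm⟩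
        have hceq : cmp G (A \ N) x = cmp G B x := cmp_eq_of_subset hsub hxB hclosed
        refine Finset.mem_filter.2 ⟨?_, ?_⟩
        · rw [← hcmp, ← hceq]
          exact cmp_mem_comps (hsub hxB)
        · exact hodd C.1 C.2
      calc 𝒜.card = (𝒜.image Subtype.val).card :=
            (Finset.card_image_of_injective 𝒜 Subtype.val_injective).symm
        _ ≤ ((comps G (A \ N)).filter (fun C => Odd C.card)).card := by
            apply Finset.card_le_card
            intro C hC
            obtain ⟨C', hC', rfl⟩ := Finset.mem_image.1 hC
            exact hkey C' hC'
        _ ≤ N.card := h N hNA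
    obtain ⟨f, hfinj, hft⟩ := (Finset.all_card_le_biUnion_card_iff_exists_injective t).1 hall
    -- totalize f
    set f' : Finset V → V := fun C => if hC : C ∈ comps G B then f ⟨C, hC⟩ else Classical.arbitrary V with hf'
    have hf'eq : ∀ C (hC : C ∈ comps G B), f' C = f ⟨C, hC⟩ := fun C hC => dif_pos hC
    have hf'S : ∀ C (hC : C ∈ comps G B), f' C ∈ S := by
      intro C hC
      rw [hf'eq C hC]
      exact Finset.mem_of_mem_filter _ (hft ⟨C, hC⟩)
    have hf'adj : ∀ C (hC : C ∈ comps G B), ∃ c ∈ C, G.Adj (f' C) c := by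
      intro C hC
      rw [hf'eq C hC]
      exact (Finset.mem_filter.1 (hft ⟨C, hC⟩)).2
    have hf'inj : ∀ C (hC : C ∈ comps G B) C' (hC' : C' ∈ comps G B), f' C = f' C' → C = C' := by
      intro C hC C' hC' heq
      rw [hf'eq C hC, hf'eq C' hC'] at heq
      exact congrArg Subtype.val (hfinj heq)
    -- surjectivity onto S
    have himg : (comps G B).image f' = S := by
      apply Finset.eq_of_subset_of_card_le
      · intro s hs
        obtain ⟨C, hC, rfl⟩ := Finset.mem_image.1 hs
        exact hf'S C hC
      · rw [Finset.card_image_of_injOn fun C hC C' hC' heq =>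
          hf'inj C (Finset.mem_coe.1 hC) C' (Finset.mem_coe.1 hC') heq]
        rw [hcompscard]
    have hsurj : ∀ s ∈ S, ∃ C, ∃ hC : C ∈ comps G B, f' C = s := by
      intro s hs
      rw [← himg] at hs
      obtain ⟨C, hC, heq⟩ := Finset.mem_image.1 hs
      exact ⟨C, hC, heq⟩
    -- key per-component data: a vertex c matched to f' C and a matching on the rest
    have hBA : B ⊆ A := by rw [hB]; exact Finset.sdiff_subset
    have key : ∀ C (hC : C ∈ comps G B), ∃ c, ∃ m : V → V, c ∈ C ∧ G.Adj (f' C) c ∧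
        ∀ a ∈ C.erase c, m a ∈ C.erase c ∧ G.Adj a (m a) ∧ m (m a) = a := by
      intro C hC
      obtain ⟨c, hcC, hadjc⟩ := hf'adj C hC
      have hCB : C ⊆ B := comps_subset hC
      have hCA' : C ⊆ A := hCB.trans hBA
      have hCodd : Odd C.card := hodd C hC
      have hScard1 : 1 ≤ S.card := by
        rw [← hSeq]
        exact Finset.card_pos.2 ⟨C, Finset.mem_filter.2 ⟨hC, hCodd⟩⟩
      obtain ⟨m, hm⟩ : Matchable G (C.erase c) := by
        apply ih
        · have h1 := Finset.card_le_card hCA'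
          have h2 := Finset.card_erase_of_mem hcC
          have h3 : 1 ≤ C.card := Finset.card_pos.2 ⟨c, hcC⟩
          omega
        · intro T hT
          by_contra hTc
          push_neg at hTc
          have hpar := oddCount_parity (G := G) (B := (C.erase c) \ T)
          have hTec := Finset.card_le_card hT
          rw [Finset.card_erase_of_mem hcC] at hTec
          have hcards : ((C.erase c) \ T).card = C.card - 1 - T.card := by
            rw [Finset.card_sdiff_of_subset hT, Finset.card_erase_of_mem hcC]
          have hCodd' := Nat.odd_iff.1 hCodd
          have hCpos : 1 ≤ C.card := Finset.card_pos.2 ⟨c, hcC⟩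
          have hge : T.card + 2 ≤ oddCount G ((C.erase c) \ T) := by omega
          have hcT : c ∉ T := fun hcT => (Finset.mem_erase.1 (hT hcT)).1 rfl
          have hTC : T ⊆ C := hT.trans (Finset.erase_subset c C)
          have hTB : T ⊆ B := hTC.trans hCB
          set U' : Finset V := S ∪ insert c T with hU'
          have hU'A : U' ⊆ A := by
            rw [hU']
            exact Finset.union_subset hSA (Finset.insert_subset (hCA' hcC) (hTC.trans hCA'))
          have hdisjU : Disjoint S (insert c T) := by
            rw [Finset.disjoint_right]
            intro x hx
            rcases Finset.mem_insert.1 hx with rfl | hxT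
            · exact (Finset.mem_sdiff.1 (hCB hcC)).2
            · exact (Finset.mem_sdiff.1 (hTB hxT)).2
          have hU'card : U'.card = S.card + T.card + 1 := by
            rw [hU', Finset.card_union_of_disjoint hdisjU, Finset.card_insert_of_notMem hcT]
            omega
          have hAU' : A \ U' = (B \ C) ∪ ((C.erase c) \ T) := by
            rw [hU', hB]
            ext x
            simp only [Finset.mem_sdiff, Finset.mem_union, Finset.mem_insert, Finset.mem_erase]
            constructor
            · rintro ⟨hxA, hni⟩
              push_neg at hni
              obtain ⟨hxS, hxc, hxT⟩ := hni
              by_cases hxC : x ∈ C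
              · exact Or.inr ⟨⟨hxc, hxC⟩, hxT⟩
              · exact Or.inl ⟨⟨hxA, hxS⟩, hxC⟩
            · rintro (⟨⟨hxA, hxS⟩, hxC⟩ | ⟨⟨hxc, hxC⟩, hxT⟩)
              · refine ⟨hxA, ?_⟩
                rintro (hxS' | rfl | hxT')
                · exact hxS hxS'
                · exact hxC hcC
                · exact hxC (hTC hxT')
              · refine ⟨hCA' hxC, ?_⟩
                rintro (hxS' | rfl | hxT')
                · exact (Finset.mem_sdiff.1 (hCB hxC)).2 hxS'
                · exact hxc rfl
                · exact hxT hxT'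
          have hsep : ∀ u ∈ B \ C, ∀ v ∈ (C.erase c) \ T, ¬ G.Adj u v := by
            intro u hu v hv hadj
            have : u ∈ C := closed_of_comp hC v
              (Finset.mem_of_mem_erase (Finset.mem_sdiff.1 hv).1) u
              (Finset.mem_sdiff.1 hu).1 hadj.symm
            exact (Finset.mem_sdiff.1 hu).2 this
          have hdisj : Disjoint (B \ C) ((C.erase c) \ T) := by
            apply Finset.disjoint_of_subset_right
              (subset_trans Finset.sdiff_subset (Finset.erase_subset c C))
            exact Finset.sdiff_disjoint
          have hBC : oddCount G (B \ C) = S.card - 1 := by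
            have h1 := oddCount_sdiff hC
            have h2 : oddCount G C = 1 := by rw [oddCount_comp hC]; simp [hCodd]
            omega
          have hcount : oddCount G (A \ U') =
              S.card - 1 + oddCount G ((C.erase c) \ T) := by
            rw [hAU', oddCount_union hdisj hsep, hBC]
          have hle := h U' hU'A
          have hmax' := hmax U' hU'A (by omega)
          omega
      exact ⟨c, m, hcC, hadjc, hm⟩
    choose c0 m0 hc0 hadj0 hm0 using key
    choose Cof hCof hfCof using hsurj
    set g : V → V := fun x =>
      if hx : x ∈ B then
        (if x = c0 (cmp G B x) (cmp_mem_comps hx) then f' (cmp G B x)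
         else m0 (cmp G B x) (cmp_mem_comps hx) x)
      else if hs : x ∈ S then c0 (Cof x hs) (hCof x hs) else x
      with hg
    have gcomp : ∀ x (hx : x ∈ B) (D : Finset V) (hD : D ∈ comps G B), cmp G B x = D →
        g x = if x = c0 D hD then f' D else m0 D hD x := by
      rintro x hx D hD rfl
      simp only [hg]
      rw [dif_pos hx]
    have gS : ∀ x (hxB : x ∉ B) (hs : x ∈ S), g x = c0 (Cof x hs) (hCof x hs) := by
      intro x hxB hs
      simp only [hg]
      rw [dif_neg hxB, dif_pos hs]
    have hc0irr : ∀ (D : Finset V) (hD : D ∈ comps G B) (D' : Finset V)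
        (hD' : D' ∈ comps G B), D = D' → c0 D hD = c0 D' hD' := by
      rintro D hD D' hD' rfl
      rfl
    have hSnotB : ∀ s ∈ S, s ∉ B := by
      intro s hs hsB
      exact (Finset.mem_sdiff.1 (hB ▸ hsB)).2 hs
    refine ⟨g, ?_⟩
    intro a ha
    by_cases haB : a ∈ B
    · have hCmem : cmp G B a ∈ comps G B := cmp_mem_comps haB
      set C : Finset V := cmp G B a with hCdef
      have haC : a ∈ C := mem_cmp_self haB
      have hCB : C ⊆ B := comps_subset hCmem
      by_cases hac : a = c0 C hCmem
      · have hga : g a = f' C := by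
          rw [gcomp a haB C hCmem rfl, if_pos hac]
        have hfS : f' C ∈ S := hf'S C hCmem
        have hfnB : f' C ∉ B := hSnotB _ hfS
        have hCofC : Cof (f' C) hfS = C :=
          hf'inj _ (hCof _ hfS) _ hCmem (hfCof _ hfS)
        refine ⟨hga ▸ hSA hfS, ?_, ?_⟩
        · rw [hga]
          have := hadj0 C hCmem
          rw [← hac] at this
          exact this.symm
        · rw [hga, gS _ hfnB hfS, hc0irr _ (hCof _ hfS) _ hCmem hCofC, ← hac]
      · have haCe : a ∈ C.erase (c0 C hCmem) := Finset.mem_erase.2 ⟨hac, haC⟩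
        obtain ⟨hmem, hadjm, hinv⟩ := hm0 C hCmem a haCe
        have hga : g a = m0 C hCmem a := by
          rw [gcomp a haB C hCmem rfl, if_neg hac]
        have hmC : m0 C hCmem a ∈ C := Finset.mem_of_mem_erase hmem
        have hmB : m0 C hCmem a ∈ B := hCB hmC
        refine ⟨hga ▸ hBA hmB, hga ▸ hadjm, ?_⟩
        rw [hga, gcomp _ hmB C hCmem (cmp_eq_of_mem_comp hCmem hmC),
          if_neg (Finset.mem_erase.1 hmem).1, hinv]
    · have haS : a ∈ S := by
        by_contra haS
        exact haB (hB ▸ Finset.mem_sdiff.2 ⟨ha, haS⟩)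
      have hga : g a = c0 (Cof a haS) (hCof a haS) := gS a haB haS
      set C' : Finset V := Cof a haS with hC'def
      have hC'mem : C' ∈ comps G B := hCof a haS
      have hcc : c0 C' hC'mem ∈ C' := hc0 C' hC'mem
      have hccB : c0 C' hC'mem ∈ B := comps_subset hC'mem hcc
      refine ⟨hga ▸ hBA hccB, ?_, ?_⟩
      · rw [hga]
        have := hadj0 C' hC'mem
        rw [hfCof a haS] at this
        exact this
      · rw [hga, gcomp _ hccB C' hC'mem (cmp_eq_of_mem_comp hC'mem hcc),
          if_pos rfl, hfCof a haS]

end TutteAux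

section Binding

open TutteAux

variable [Fintype V] {G : SimpleGraph V} {k : ℕ}

lemma binding_nonempty (hβ : 1 ≤ bindingNum G k) :
    ∃ S : Finset V, k ≤ S.card ∧ kNbhd G k S ≠ Finset.univ := by
  by_contra hne
  push_neg at hne
  have hempty : ¬ (Finset.univ.filter fun S : Finset V =>
      k ≤ S.card ∧ kNbhd G k S ≠ Finset.univ).Nonempty := by
    rintro ⟨S, hS⟩
    rw [Finset.mem_filter] at hS
    exact hS.2.2 (hne S hS.2.1)
  rw [bindingNum, dif_neg hempty] at hβ
  norm_num at hβ

lemma binding_prop (hk : 2 ≤ k) (hβ : 1 ≤ bindingNum G k) (S : Finset V)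
    (hSk : k ≤ S.card) (hne : kNbhd G k S ≠ Finset.univ) :
    S.card ≤ (kNbhd G k S).card := by
  have hmem : S ∈ Finset.univ.filter fun S : Finset V =>
      k ≤ S.card ∧ kNbhd G k S ≠ Finset.univ :=
    Finset.mem_filter.2 ⟨Finset.mem_univ S, hSk, hne⟩
  have hnonempty : (Finset.univ.filter fun S : Finset V =>
      k ≤ S.card ∧ kNbhd G k S ≠ Finset.univ).Nonempty := ⟨S, hmem⟩
  rw [bindingNum, dif_pos hnonempty] at hβ
  have hval := Finset.inf'_le (fun S => ((kNbhd G k S).card : ℝ) / (S.card : ℝ)) hmem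
  have h1 : (1 : ℝ) ≤ ((kNbhd G k S).card : ℝ) / (S.card : ℝ) := le_trans hβ hval
  have hSpos : (0 : ℝ) < (S.card : ℝ) := by
    have : 0 < S.card := by omega
    exact_mod_cast this
  rw [le_div_iff₀ hSpos, one_mul] at h1
  exact_mod_cast h1

lemma binding_minDegree (hk : 2 ≤ k) (hβ : 1 ≤ bindingNum G k) (x : V) :
    k ≤ (Finset.univ.filter fun u => G.Adj x u).card := by
  by_contra hdeg
  push_neg at hdeg
  obtain ⟨S₀, hS₀, _⟩ := binding_nonempty hβ
  have hkcard : k ≤ (Finset.univ : Finset V).card :=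
    hS₀.trans (Finset.card_le_card (Finset.subset_univ S₀))
  have hxnot : x ∉ kNbhd G k Finset.univ := by
    rw [kNbhd, Finset.mem_filter]
    push_neg
    intro _
    exact hdeg
  have hne : kNbhd G k Finset.univ ≠ Finset.univ := by
    intro heq
    rw [heq] at hxnot
    exact hxnot (Finset.mem_univ x)
  have := binding_prop hk hβ Finset.univ hkcard hne
  have hlt : (kNbhd G k Finset.univ).card < (Finset.univ : Finset V).card :=
    Finset.card_lt_card ((Finset.subset_univ _).ssubset_of_ne hne)
  omega

lemma binding_oddCount_le (hk : 2 ≤ k) (hβ : 1 ≤ bindingNum G k) (U : Finset V)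
    (hU : U.Nonempty) : oddCount G (Finset.univ \ U) ≤ U.card := by
  classical
  by_contra hlt
  push_neg at hlt
  set B : Finset V := Finset.univ \ U with hB
  set OC : Finset (Finset V) := (comps G B).filter (fun C => Odd C.card) with hOC
  have ht : OC.card = oddCount G B := rfl
  set tn : ℕ := OC.card with htn
  have hUt : U.card < tn := hlt
  have hOCcomps : OC ⊆ comps G B := Finset.filter_subset _ _
  have hmemB : ∀ x : V, x ∈ B ↔ x ∉ U := by
    intro x
    rw [hB, Finset.mem_sdiff]
    simp
  have hVne : Nonempty V := ⟨hU.choose⟩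
  set rep : Finset V → V := fun C => if h : C.Nonempty then h.choose else Classical.arbitrary V
    with hrepdef
  have hrep : ∀ C ∈ OC, rep C ∈ C := by
    intro C hC
    have hne := comps_nonempty (hOCcomps hC)
    simp only [hrepdef, dif_pos hne]
    exact hne.choose_spec
  have hrepinj : ∀ C ∈ OC, ∀ C' ∈ OC, rep C = rep C' → C = C' := by
    intro C hC C' hC' heq
    by_contra hne
    exact Finset.disjoint_left.1 (comps_disjoint (hOCcomps hC) (hOCcomps hC') hne)
      (hrep C hC) (heq ▸ hrep C' hC')
  have hBsub : ∀ C ∈ OC, C ⊆ B := fun C hC => comps_subset (hOCcomps hC)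
  have hOCne : OC.Nonempty := Finset.card_pos.1 (by omega)
  obtain ⟨C₀, hC₀⟩ := hOCne
  have hx₀ : rep C₀ ∈ B := hBsub C₀ hC₀ (hrep C₀ hC₀)
  by_cases hcase : k ≤ tn
  · set S : Finset V := OC.image rep with hS
    have hScard : S.card = tn := by
      rw [hS]
      exact Finset.card_image_of_injOn fun C hC C' hC' =>
        hrepinj C (Finset.mem_coe.1 hC) C' (Finset.mem_coe.1 hC')
    have hsub : kNbhd G k S ⊆ U := by
      intro x hx
      by_contra hxU
      have hxB : x ∈ B := (hmemB x).2 hxU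
      rw [kNbhd, Finset.mem_filter] at hx
      have hcard1 : (S.filter fun u => G.Adj x u).card ≤ 1 := by
        have hsub1 : (S.filter fun u => G.Adj x u) ⊆ {rep (cmp G B x)} := by
          intro y hy
          obtain ⟨hyS, hadj⟩ := Finset.mem_filter.1 hy
          rw [hS] at hyS
          obtain ⟨C, hCOC, rfl⟩ := Finset.mem_image.1 hyS
          have hyB : rep C ∈ B := hBsub C hCOC (hrep C hCOC)
          have hycmp : rep C ∈ cmp G B x := mem_cmp_iff.2 ⟨hyB, rel_of_adj hadj hxB hyB⟩
          have h1 : cmp G B (rep C) = cmp G B x := cmp_eq_cmp_of_mem hycmp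
          have hCeq : cmp G B (rep C) = C := cmp_eq_of_mem_comp (hOCcomps hCOC) (hrep C hCOC)
          rw [Finset.mem_singleton, ← hCeq, h1]
        calc (S.filter fun u => G.Adj x u).card
            ≤ ({rep (cmp G B x)} : Finset V).card := Finset.card_le_card hsub1
          _ = 1 := rfl
      have := hx.2
      omega
    have hneuniv : kNbhd G k S ≠ Finset.univ := by
      intro heq
      have h0 : rep C₀ ∈ kNbhd G k S := by rw [heq]; exact Finset.mem_univ _
      exact (hmemB _).1 hx₀ (hsub h0)
    have hb := binding_prop hk hβ S (by omega) hneuniv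
    have hc := Finset.card_le_card hsub
    omega
  · push_neg at hcase
    have hu1 : 1 ≤ U.card := Finset.card_pos.2 hU
    set m : ℕ := k - 1 - U.card with hm
    have hm1 : 1 ≤ m := by omega
    have hdegC : ∀ C ∈ OC, m ≤ C.card := by
      intro C hC
      obtain ⟨x, hxC⟩ := comps_nonempty (hOCcomps hC)
      have hdeg := binding_minDegree hk hβ x
      have hxB : x ∈ B := hBsub C hC hxC
      have hnsub : (Finset.univ.filter fun u => G.Adj x u) ⊆ (C.erase x) ∪ U := by
        intro y hy
        have hadj : G.Adj x y := (Finset.mem_filter.1 hy).2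
        by_cases hyU : y ∈ U
        · exact Finset.mem_union_right _ hyU
        · have hyB : y ∈ B := (hmemB y).2 hyU
          have hyc : y ∈ cmp G B x := mem_cmp_iff.2 ⟨hyB, rel_of_adj hadj hxB hyB⟩
          rw [cmp_eq_of_mem_comp (hOCcomps hC) hxC] at hyc
          exact Finset.mem_union_left _
            (Finset.mem_erase.2 ⟨(G.ne_of_adj hadj).symm, hyc⟩)
      have h1 := Finset.card_le_card hnsub
      have h2 := Finset.card_union_le (C.erase x) U
      have h3 : (C.erase x).card = C.card - 1 := Finset.card_erase_of_mem hxC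
      have h4 : 1 ≤ C.card := Finset.card_pos.2 ⟨x, hxC⟩
      omega
    set sub : Finset V → Finset V := fun C =>
      if h : m ≤ C.card then (Finset.exists_subset_card_eq h).choose else ∅ with hsubdef
    have hsubC : ∀ C ∈ OC, sub C ⊆ C ∧ (sub C).card = m := by
      intro C hC
      have h := hdegC C hC
      simp only [hsubdef, dif_pos h]
      exact ⟨(Finset.exists_subset_card_eq h).choose_spec.1,
        (Finset.exists_subset_card_eq h).choose_spec.2⟩
    set S : Finset V := U ∪ OC.biUnion sub with hS
    have hdisjU : Disjoint U (OC.biUnion sub) := by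
      rw [Finset.disjoint_right]
      intro y hy
      obtain ⟨C, hC, hyC⟩ := Finset.mem_biUnion.1 hy
      exact (hmemB y).1 (hBsub C hC ((hsubC C hC).1 hyC))
    have hpair : ∀ C ∈ OC, ∀ C' ∈ OC, C ≠ C' → Disjoint (sub C) (sub C') := by
      intro C hC C' hC' hne
      exact Finset.disjoint_of_subset_left (hsubC C hC).1
        (Finset.disjoint_of_subset_right (hsubC C' hC').1
          (comps_disjoint (hOCcomps hC) (hOCcomps hC') hne))
    have hbcard : (OC.biUnion sub).card = tn * m := by
      rw [Finset.card_biUnion hpair, Finset.sum_congr rfl fun C hC => (hsubC C hC).2,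
        Finset.sum_const, smul_eq_mul]
    have hScard : S.card = U.card + tn * m := by
      rw [hS, Finset.card_union_of_disjoint hdisjU, hbcard]
    have htm : U.card + 1 ≤ tn := by omega
    have hmul1 : (U.card + 1) * m ≤ tn * m := Nat.mul_le_mul_right m htm
    have hmul2 : (U.card + 1) * m = U.card * m + m := by ring
    have hmul3 : 1 ≤ U.card * m := by
      have : 1 * 1 ≤ U.card * m := Nat.mul_le_mul hu1 hm1
      omega
    have hSk : k ≤ S.card := by omega
    have hsub2 : kNbhd G k S ⊆ U := by
      intro x hx
      by_contra hxU
      have hxB : x ∈ B := (hmemB x).2 hxU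
      rw [kNbhd, Finset.mem_filter] at hx
      have hcard1 : (S.filter fun u => G.Adj x u).card ≤ U.card + m := by
        have hsub1 : (S.filter fun u => G.Adj x u) ⊆ U ∪ sub (cmp G B x) := by
          intro y hy
          obtain ⟨hyS, hadj⟩ := Finset.mem_filter.1 hy
          rw [hS] at hyS
          rcases Finset.mem_union.1 hyS with hyU | hyb
          · exact Finset.mem_union_left _ hyU
          · obtain ⟨C, hC, hyC⟩ := Finset.mem_biUnion.1 hyb
            have hyB : y ∈ B := hBsub C hC ((hsubC C hC).1 hyC)
            have hyc : y ∈ cmp G B x := mem_cmp_iff.2 ⟨hyB, rel_of_adj hadj hxB hyB⟩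
            have hCeq : cmp G B y = cmp G B x := cmp_eq_cmp_of_mem hyc
            have hCeq2 : cmp G B y = C := cmp_eq_of_mem_comp (hOCcomps hC) ((hsubC C hC).1 hyC)
            refine Finset.mem_union_right _ ?_
            rw [← hCeq, hCeq2]
            exact hyC
        have hsubm : (sub (cmp G B x)).card ≤ m := by
          by_cases h : m ≤ (cmp G B x).card
          · simp only [hsubdef, dif_pos h]
            exact le_of_eq (Finset.exists_subset_card_eq h).choose_spec.2
          · simp only [hsubdef, dif_neg h]
            simp
        calc (S.filter fun u => G.Adj x u).card
            ≤ (U ∪ sub (cmp G B x)).card := Finset.card_le_card hsub1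
          _ ≤ U.card + (sub (cmp G B x)).card := Finset.card_union_le _ _
          _ ≤ U.card + m := by omega
      have := hx.2
      omega
    have hneuniv : kNbhd G k S ≠ Finset.univ := by
      intro heq
      have h0 : rep C₀ ∈ kNbhd G k S := by rw [heq]; exact Finset.mem_univ _
      exact (hmemB _).1 hx₀ (hsub2 h0)
    have hb := binding_prop hk hβ S hSk hneuniv
    have hc := Finset.card_le_card hsub2
    have hmul4 : 1 ≤ tn * m := by
      have : 1 * 1 ≤ tn * m := Nat.mul_le_mul (by omega) hm1
      omega
    omega

end Binding

theorem stmt_13 [Fintype V] (k : ℕ) (hk : 2 ≤ k) (G : SimpleGraph V)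
    (hodd : Odd (Fintype.card V)) (hβ : 1 ≤ bindingNum G k) :
    ∀ v : V, ∃ M : (G.induce ({v}ᶜ : Set V)).Subgraph, M.IsPerfectMatching := by
  intro v
  have hmatch : TutteAux.Matchable G (Finset.univ.erase v) := by
    apply TutteAux.tutte_aux G (Fintype.card V)
    · exact (Finset.card_le_card (Finset.erase_subset v Finset.univ)).trans
        (le_of_eq Finset.card_univ)
    · intro W hW
      have hvW : v ∉ W := fun hvW => (Finset.mem_erase.1 (hW hvW)).1 rfl
      have hU : (Finset.univ.erase v) \ W = Finset.univ \ insert v W := by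
        ext x
        simp only [Finset.mem_sdiff, Finset.mem_erase, Finset.mem_univ, Finset.mem_insert,
          true_and, and_true]
        tauto
      have hUcard : (insert v W).card = W.card + 1 := Finset.card_insert_of_notMem hvW
      have h1 := binding_oddCount_le hk hβ (insert v W) ⟨v, Finset.mem_insert_self v W⟩
      have hpar := TutteAux.oddCount_parity (G := G) (B := Finset.univ \ insert v W)
      have hcard : (Finset.univ \ insert v W).card = Fintype.card V - (W.card + 1) := by
        rw [Finset.card_sdiff_of_subset (Finset.subset_univ _), Finset.card_univ, hUcard]
      have hn : (insert v W).card ≤ Fintype.card V := by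
        rw [← Finset.card_univ]
        exact Finset.card_le_card (Finset.subset_univ _)
      have hno : Fintype.card V % 2 = 1 := Nat.odd_iff.1 hodd
      rw [hU]
      omega
  obtain ⟨g, hg⟩ := hmatch
  have hmem : ∀ x : V, x ∈ ({v}ᶜ : Set V) ↔ x ∈ Finset.univ.erase v := by
    intro x
    simp [Finset.mem_erase, Set.mem_compl_iff]
  refine ⟨{
    verts := Set.univ
    Adj := fun a b => G.Adj a.1 b.1 ∧ g a.1 = b.1 ∧ g b.1 = a.1
    adj_sub := fun h => h.1
    edge_vert := fun _ => Set.mem_univ _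
    symm := ⟨fun a b h => ⟨h.1.symm, h.2.2, h.2.1⟩⟩ }, ?_, fun a => Set.mem_univ a⟩
  intro a _
  have haA : a.1 ∈ Finset.univ.erase v := (hmem a.1).1 a.2
  obtain ⟨hgmem, hgadj, hginv⟩ := hg a.1 haA
  refine ⟨⟨g a.1, (hmem _).2 hgmem⟩, ⟨hgadj, rfl, hginv⟩, ?_⟩
  rintro w ⟨_, hw1, _⟩
  exact Subtype.ext hw1.symm
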